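/- For every natural number n ≥ 1, the partial sums ∑_{m=0}^{K} (−1)^m · t_m(n-1)/(m + n/2) converge as K → ∞ to π^n / (2^n · n!). -/

import Mathlib

open Filter Real MeasureTheory Topology

/-- The coefficients `t_k(n)`: `t_k(0) = 1` and
`t_k(n) = ∑_{m=0}^{k} t_m(n-1)/(m + n/2)` for `n ≥ 1`. -/
noncomputable def t : ℕ → ℕ → ℝ
  | _, 0 => 1
  | k, n + 1 => ∑ m ∈ Finset.range (k + 1), t m n / ((m : ℝ) + ((n : ℝ) + 1) / 2)

lemma t_zero' (k : ℕ) : t k 0 = 1 := rfl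

noncomputable def uu (N m : ℕ) : ℝ := t m N / ((m:ℝ) + ((N:ℝ)+1)/2)
noncomputable def aa (N m : ℕ) : ℝ := (-1)^m * uu N m


lemma t_succ (k n : ℕ) : t k (n+1) =
    ∑ m ∈ Finset.range (k + 1), t m n / ((m : ℝ) + ((n : ℝ) + 1) / 2) := rfl

lemma t_pos : ∀ n k, 0 < t k n := by
  intro n
  induction n with
  | zero => intro k; exact one_pos
  | succ n ih =>
    intro k
    rw [t_succ]
    apply Finset.sum_pos
    · intro m _
      exact div_pos (ih m) (by positivity)
    · exact Finset.nonempty_range_add_one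

lemma sum_invsqrt (k : ℕ) :
    ∑ m ∈ Finset.range (k+1), 1 / Real.sqrt ((m:ℝ)+1) ≤ 2 * Real.sqrt ((k:ℝ)+1) := by
  induction k with
  | zero => simp
  | succ k ih =>
    rw [Finset.sum_range_succ]
    have hB : (0:ℝ) < Real.sqrt ((k:ℝ)+1+1) := by positivity
    have hA : (0:ℝ) ≤ Real.sqrt ((k:ℝ)+1) := Real.sqrt_nonneg _
    have hA2 : (Real.sqrt ((k:ℝ)+1))^2 = (k:ℝ)+1 := Real.sq_sqrt (by positivity)
    have hB2 : (Real.sqrt ((k:ℝ)+1+1))^2 = (k:ℝ)+2 := by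
      rw [Real.sq_sqrt (by positivity)]; ring
    push_cast
    have h1 : 1 / Real.sqrt ((k:ℝ)+1+1) ≤ 2 * Real.sqrt ((k:ℝ)+1+1) - 2 * Real.sqrt ((k:ℝ)+1) := by
      rw [div_le_iff₀ hB]
      nlinarith [sq_nonneg (Real.sqrt ((k:ℝ)+1) - Real.sqrt ((k:ℝ)+1+1))]
    calc ∑ m ∈ Finset.range (k+1), 1 / Real.sqrt ((m:ℝ)+1) + 1 / Real.sqrt ((k:ℝ)+1+1)
        ≤ 2 * Real.sqrt ((k:ℝ)+1) + (2 * Real.sqrt ((k:ℝ)+1+1) - 2 * Real.sqrt ((k:ℝ)+1)) := by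
          push_cast at ih; linarith
      _ = 2 * Real.sqrt ((k:ℝ)+1+1) := by ring

lemma t_le : ∀ n k, t k n ≤ 4^n * Real.sqrt ((k:ℝ)+1) := by
  intro n
  induction n with
  | zero =>
    intro k
    simpa [t] using Real.one_le_sqrt.mpr (by positivity : (1:ℝ) ≤ (k:ℝ)+1)
  | succ n ih =>
    intro k
    rw [t_succ]
    have step : ∀ m ∈ Finset.range (k+1),
        t m n / ((m : ℝ) + ((n : ℝ) + 1) / 2) ≤ 4^n * (2 * (1 / Real.sqrt ((m:ℝ)+1))) := by
      intro m _
      have h1 : t m n / ((m : ℝ) + ((n : ℝ) + 1) / 2)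
          ≤ (4^n * Real.sqrt ((m:ℝ)+1)) / ((m:ℝ) + 1/2) := by
        apply div_le_div₀ (by positivity) (ih m) (by positivity)
        have : (0:ℝ) ≤ (n:ℝ) := Nat.cast_nonneg n
        linarith
      refine h1.trans ?_
      rw [div_le_iff₀ (by positivity)]
      have hs : Real.sqrt ((m:ℝ)+1) * Real.sqrt ((m:ℝ)+1) = (m:ℝ)+1 :=
        Real.mul_self_sqrt (by positivity)
      have hsp : (0:ℝ) < Real.sqrt ((m:ℝ)+1) := by positivity
      rw [show (4:ℝ)^n * (2 * (1 / Real.sqrt ((m:ℝ)+1))) * ((m:ℝ) + 1/2)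
          = 4^n * (2 * ((m:ℝ) + 1/2)) / Real.sqrt ((m:ℝ)+1) by ring]
      rw [le_div_iff₀ hsp]
      nlinarith [pow_pos (show (0:ℝ) < 4 by norm_num) n]
    calc ∑ m ∈ Finset.range (k+1), t m n / ((m : ℝ) + ((n : ℝ) + 1) / 2)
        ≤ ∑ m ∈ Finset.range (k+1), 4^n * (2 * (1 / Real.sqrt ((m:ℝ)+1))) :=
          Finset.sum_le_sum step
      _ = 4^n * 2 * ∑ m ∈ Finset.range (k+1), 1 / Real.sqrt ((m:ℝ)+1) := by
          rw [Finset.mul_sum]; congr 1; ext m; ring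
      _ ≤ 4^n * 2 * (2 * Real.sqrt ((k:ℝ)+1)) := by
          apply mul_le_mul_of_nonneg_left (sum_invsqrt k) (by positivity)
      _ = 4^(n+1) * Real.sqrt ((k:ℝ)+1) := by ring



lemma uu_pos (N m : ℕ) : 0 < uu N m := div_pos (t_pos N m) (by positivity)

lemma uu_le (N m : ℕ) : uu N m ≤ 2 * t m N := by
  rw [uu, div_le_iff₀ (by positivity)]
  nlinarith [t_pos N m, Nat.cast_nonneg (α := ℝ) m, Nat.cast_nonneg (α := ℝ) N]

lemma summable_sqrt_geom {y : ℝ} (h0 : 0 ≤ y) (h1 : y < 1) :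
    Summable fun m : ℕ => Real.sqrt ((m:ℝ)+1) * y^m := by
  have hb : Summable fun m : ℕ => ((m:ℝ)+1) * y^m := by
    have h1' : ‖y‖ < 1 := by rwa [Real.norm_eq_abs, abs_of_nonneg h0]
    have hs1 := summable_pow_mul_geometric_of_norm_lt_one (R := ℝ) 1 h1'
    have hs2 := summable_geometric_of_lt_one h0 h1
    have := hs1.add hs2
    refine this.congr fun m => ?_
    push_cast; ring
  refine Summable.of_nonneg_of_le (fun m => by positivity) (fun m => ?_) hb
  have hs : Real.sqrt ((m:ℝ)+1) ≤ (m:ℝ)+1 := by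
    nlinarith [Real.sq_sqrt (show (0:ℝ) ≤ (m:ℝ)+1 by positivity),
      Real.sqrt_nonneg ((m:ℝ)+1), sq_nonneg (Real.sqrt ((m:ℝ)+1) - 1)]
  exact mul_le_mul_of_nonneg_right hs (by positivity)

lemma summable_t_abs (N : ℕ) {y : ℝ} (hy : |y| < 1) :
    Summable fun m : ℕ => t m N * |y|^(2*m) := by
  have hsq : |y|^2 < 1 := by nlinarith [abs_nonneg y]
  have := (summable_sqrt_geom (by positivity) hsq).mul_left ((4:ℝ)^N)
  refine Summable.of_nonneg_of_le (fun m => mul_nonneg (t_pos N m).le (by positivity)) (fun m => ?_) this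
  rw [pow_mul]
  calc t m N * (|y|^2)^m ≤ (4^N * Real.sqrt ((m:ℝ)+1)) * (|y|^2)^m :=
        mul_le_mul_of_nonneg_right (t_le N m) (by positivity)
    _ = 4^N * (Real.sqrt ((m:ℝ)+1) * (|y|^2)^m) := by ring

lemma summable_tG (N : ℕ) {y : ℝ} (hy : |y| < 1) :
    Summable fun m : ℕ => (-1:ℝ)^m * t m N * y^(2*m) := by
  refine Summable.of_norm_bounded (summable_t_abs N hy) (fun m => ?_)
  rw [norm_mul, norm_mul, norm_pow, norm_pow, norm_neg, norm_one, one_pow, one_mul,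
    Real.norm_eq_abs, Real.norm_eq_abs, abs_of_pos (t_pos N m)]

lemma summable_aa (N : ℕ) {y : ℝ} (hy : |y| < 1) :
    Summable fun m : ℕ => aa N m * y^(2*m) := by
  have h2 := (summable_t_abs N hy).mul_left 2
  refine Summable.of_norm_bounded h2 (fun m => ?_)
  rw [norm_mul, aa, norm_mul, norm_pow, norm_neg, norm_one, one_pow, one_mul,
    Real.norm_eq_abs, Real.norm_eq_abs, abs_of_pos (uu_pos N m), abs_pow]
  have := uu_le N m
  nlinarith [pow_nonneg (abs_nonneg y) (2*m), uu_pos N m]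

lemma hasSum_G0 {y : ℝ} (hy : |y| < 1) :
    HasSum (fun m : ℕ => (-1:ℝ)^m * t m 0 * y^(2*m)) (1/(1+y^2)) := by
  have h : ‖-y^2‖ < 1 := by
    rw [norm_neg, norm_pow, Real.norm_eq_abs]; nlinarith [abs_nonneg y]
  have := hasSum_geometric_of_norm_lt_one h
  have heq : (fun m : ℕ => (-y^2)^m) = fun m : ℕ => (-1:ℝ)^m * t m 0 * y^(2*m) := by
    funext m
    rw [t_zero', show (-y^2) = (-1) * y^2 by ring, mul_pow, pow_mul]
    ring
  rw [heq] at this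
  rwa [one_div, ← sub_neg_eq_add]

lemma hasSum_aa (N : ℕ) {y : ℝ} (hy : |y| < 1) :
    HasSum (fun m => aa N m * y^(2*m))
      ((1+y^2) * ∑' m, (-1:ℝ)^m * t m (N+1) * y^(2*m)) := by
  set c : ℕ → ℝ := fun m => (-1)^m * t m (N+1) * y^(2*m) with hc_def
  have hc : HasSum c (∑' m, c m) := (summable_tG (N+1) hy).hasSum
  have hd0 : HasSum (fun m => y^2 * c m) (y^2 * ∑' m, c m) := hc.mul_left _
  set d : ℕ → ℝ := fun m => if m = 0 then 0 else y^2 * c (m-1) with hd_def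
  have hshift : (fun n : ℕ => d (n+1)) = fun n => y^2 * c n := by
    funext n; simp [hd_def]
  have hd : HasSum d (y^2 * ∑' m, c m) := by
    have := (hasSum_nat_add_iff (f := d) 1).mp (by rw [hshift]; exact hd0)
    simpa [hd_def] using this
  have hadd := hc.add hd
  have hfun : (fun m => c m + d m) = fun m => aa N m * y^(2*m) := by
    funext m
    cases m with
    | zero =>
      simp only [hd_def, hc_def, if_pos rfl, add_zero]
      have h0 : t 0 (N+1) = t 0 N / ((0:ℝ) + ((N:ℝ)+1)/2) := by
        rw [t_succ]; simp
      simp [aa, uu, h0]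
    | succ m =>
      have hdiff : t (m+1) (N+1) = t m (N+1) + t (m+1) N / (((m:ℝ)+1) + ((N:ℝ)+1)/2) := by
        rw [t_succ, t_succ, Finset.sum_range_succ]
        push_cast; ring
      simp only [hd_def, hc_def, if_neg (Nat.succ_ne_zero m), Nat.add_sub_cancel]
      rw [hdiff, aa, uu]
      push_cast
      rw [show 2*(m+1) = 2*m+2 by ring, pow_add, pow_succ]
      ring
  rw [hfun] at hadd
  convert hadd using 1
  ring



lemma sum_eq_integral (N : ℕ) {y : ℝ} (h0 : 0 ≤ y) (h1 : y < 1) :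
    ∑' m, aa N m * y^(2*m+(N+1)) =
      ∫ s in Set.Ioc (0:ℝ) y, (∑' m, ((-1:ℝ)^m * (2 * t m N)) * s^(2*m+N)) := by
  set F : ℕ → ℝ → ℝ := fun m s => ((-1:ℝ)^m * (2 * t m N)) * s^(2*m+N) with hF
  have hcont : ∀ m, Continuous (F m) := by
    intro m; exact continuous_const.mul (continuous_pow _)
  have hterm : ∀ m : ℕ, aa N m * y^(2*m+(N+1)) = ∫ s in Set.Ioc (0:ℝ) y, F m s := by
    intro m
    rw [← intervalIntegral.integral_of_le h0, intervalIntegral.integral_const_mul,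
      integral_pow]
    rw [zero_pow (by omega : 2*m+N+1 ≠ 0)]
    rw [aa, uu]
    have hden : ((m:ℝ) + ((N:ℝ)+1)/2) ≠ 0 := by positivity
    have hden2 : ((2*m+N:ℕ):ℝ) + 1 ≠ 0 := by positivity
    field_simp
    push_cast
    ring
  have hint : ∀ m : ℕ, Integrable (F m) (volume.restrict (Set.Ioc 0 y)) :=
    fun m => (hcont m).integrableOn_Ioc
  have hbound : ∀ m : ℕ, ∫ s in Set.Ioc (0:ℝ) y, ‖F m s‖
      ≤ (2 * t m N * y^(2*m+N)) * y := by
    intro m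
    have hC : ∀ s ∈ Set.Ioc (0:ℝ) y, ‖(fun s => ‖F m s‖) s‖ ≤ 2 * t m N * y^(2*m+N) := by
      intro s hs
      rw [norm_norm, hF]
      rw [norm_mul, norm_mul, norm_mul, norm_pow, norm_neg, norm_one, one_pow, one_mul,
        Real.norm_eq_abs, Real.norm_eq_abs, Real.norm_eq_abs,
        abs_of_pos (t_pos N m), abs_of_pos (show (0:ℝ) < 2 by norm_num),
        abs_pow, abs_of_nonneg (le_of_lt hs.1)]
      have : s^(2*m+N) ≤ y^(2*m+N) := pow_le_pow_left₀ (le_of_lt hs.1) hs.2 _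
      nlinarith [t_pos N m]
    have hfin : volume (Set.Ioc (0:ℝ) y) < ⊤ := measure_Ioc_lt_top
    have := norm_setIntegral_le_of_norm_le_const hfin hC
    rw [measureReal_def, Real.volume_Ioc, sub_zero, ENNReal.toReal_ofReal h0] at this
    calc ∫ s in Set.Ioc (0:ℝ) y, ‖F m s‖
        ≤ ‖∫ s in Set.Ioc (0:ℝ) y, ‖F m s‖‖ := le_abs_self _
      _ ≤ 2 * t m N * y^(2*m+N) * y := this
  have hmaj : Summable fun m : ℕ => (2 * t m N * y^(2*m+N)) * y := by
    have habs : |y| < 1 := by rwa [abs_of_nonneg h0]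
    have := (summable_t_abs N habs).mul_left 2
    refine Summable.of_nonneg_of_le
      (fun m => by nlinarith [t_pos N m, pow_nonneg h0 (2*m+N), mul_nonneg (pow_nonneg h0 (2*m+N)) h0, mul_nonneg (mul_nonneg (t_pos N m).le (pow_nonneg h0 (2*m+N))) h0]) (fun m => ?_) this
    have h2 : y^(2*m+N) * y ≤ y^(2*m) := by
      rw [pow_add, mul_assoc]
      have : y^N * y ≤ 1 := by
        calc y^N * y = y^(N+1) := by rw [pow_succ]
          _ ≤ 1 := pow_le_one₀ h0 h1.le
      nlinarith [pow_nonneg h0 (2*m), pow_nonneg h0 N]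
    have h3 : y^(2*m) = |y|^(2*m) := by rw [abs_of_nonneg h0]
    calc 2 * t m N * y^(2*m+N) * y = 2 * t m N * (y^(2*m+N) * y) := by ring
      _ ≤ 2 * t m N * y^(2*m) := by nlinarith [t_pos N m, pow_nonneg h0 (2*m+N)]
      _ = 2 * (t m N * |y|^(2*m)) := by rw [← h3]; ring
  have hsumnorm : Summable fun m : ℕ => ∫ s in Set.Ioc (0:ℝ) y, ‖F m s‖ :=
    Summable.of_nonneg_of_le
      (fun m => integral_nonneg (fun s => norm_nonneg _)) hbound hmaj
  calc ∑' m, aa N m * y^(2*m+(N+1)) = ∑' m, ∫ s in Set.Ioc (0:ℝ) y, F m s := by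
        exact tsum_congr hterm
    _ = ∫ s in Set.Ioc (0:ℝ) y, (∑' m, F m s) :=
        integral_tsum_of_summable_integral_norm hint hsumnorm

lemma ftc_pow (N : ℕ) (y : ℝ) :
    ∫ s in (0:ℝ)..y, 2*(2*arctan s)^N / ((Nat.factorial N : ℝ) * (1+s^2))
      = (2*arctan y)^(N+1) / (Nat.factorial (N+1) : ℝ) := by
  have hderiv : ∀ s ∈ Set.uIcc (0:ℝ) y,
      HasDerivAt (fun s => (2*arctan s)^(N+1) / (Nat.factorial (N+1) : ℝ))
        (2*(2*arctan s)^N / ((Nat.factorial N : ℝ) * (1+s^2))) s := by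
    intro s _
    have h1 : HasDerivAt (fun s : ℝ => 2*arctan s) (2 * (1/(1+s^2))) s :=
      (hasDerivAt_arctan s).const_mul 2
    have h2 := (h1.pow (N+1)).div_const (Nat.factorial (N+1) : ℝ)
    refine HasDerivAt.congr_deriv h2 ?_
    have hfac : (Nat.factorial (N+1) : ℝ) = ((N:ℝ)+1) * (Nat.factorial N : ℝ) := by
      rw [Nat.factorial_succ]; push_cast; ring
    have hs2 : (1:ℝ)+s^2 ≠ 0 := by positivity
    have hfN : (Nat.factorial N : ℝ) ≠ 0 := Nat.cast_ne_zero.mpr (Nat.factorial_ne_zero N)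
    rw [hfac]
    field_simp
    push_cast
    ring
  have hcont : Continuous fun s : ℝ => 2*(2*arctan s)^N / ((Nat.factorial N : ℝ) * (1+s^2)) := by
    apply Continuous.div
    · exact continuous_const.mul ((continuous_const.mul continuous_arctan).pow N)
    · continuity
    · intro s
      have : (0:ℝ) < 1 + s^2 := by positivity
      positivity
  rw [intervalIntegral.integral_eq_sub_of_hasDerivAt hderiv (hcont.intervalIntegrable 0 y)]
  simp [Real.arctan_zero]



lemma mainIdentity : ∀ (N : ℕ) {y : ℝ}, 0 ≤ y → y < 1 →
    ∑' m, aa N m * y^(2*m+(N+1)) = (2*arctan y)^(N+1) / (Nat.factorial (N+1) : ℝ) := by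
  intro N
  induction N with
  | zero =>
    intro y h0 h1
    rw [sum_eq_integral 0 h0 h1, ← ftc_pow 0 y, intervalIntegral.integral_of_le h0]
    apply setIntegral_congr_fun measurableSet_Ioc
    intro s hs
    beta_reduce
    have habs : |s| < 1 := by
      rw [abs_of_pos hs.1]; exact lt_of_le_of_lt hs.2 h1
    have hG := (hasSum_G0 habs).mul_left 2
    have heq : (fun m : ℕ => 2 * ((-1:ℝ)^m * t m 0 * s^(2*m)))
        = fun m : ℕ => ((-1:ℝ)^m * (2 * t m 0)) * s^(2*m+0) := by
      funext m; rw [add_zero]; ring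
    rw [heq] at hG
    rw [hG.tsum_eq]
    have hs2 : (1:ℝ)+s^2 ≠ 0 := by positivity
    simp [Nat.factorial]
    ring
  | succ P ih =>
    intro y h0 h1
    rw [sum_eq_integral (P+1) h0 h1, ← ftc_pow (P+1) y, intervalIntegral.integral_of_le h0]
    apply setIntegral_congr_fun measurableSet_Ioc
    intro s hs
    beta_reduce
    have hs0 : 0 < s := hs.1
    have hs1 : s < 1 := lt_of_le_of_lt hs.2 h1
    have habs : |s| < 1 := by rw [abs_of_pos hs0]; exact hs1
    set G := ∑' m, (-1:ℝ)^m * t m (P+1) * s^(2*m) with hGdef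
    have hG : HasSum (fun m : ℕ => (-1:ℝ)^m * t m (P+1) * s^(2*m)) G :=
      (summable_tG (P+1) habs).hasSum
    -- LHS = 2 s^{P+1} G
    have hLHS : (∑' m, ((-1:ℝ)^m * (2 * t m (P+1))) * s^(2*m+(P+1)))
        = 2 * s^(P+1) * G := by
      have := hG.mul_left (2 * s^(P+1))
      have heq : (fun m : ℕ => 2 * s^(P+1) * ((-1:ℝ)^m * t m (P+1) * s^(2*m)))
          = fun m : ℕ => ((-1:ℝ)^m * (2 * t m (P+1))) * s^(2*m+(P+1)) := by
        funext m; rw [pow_add]; ring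
      rw [heq] at this
      exact this.tsum_eq
    -- telescope + IH
    have htel := hasSum_aa P habs
    have hmul := htel.mul_left (s^(P+1))
    have heq2 : (fun m : ℕ => s^(P+1) * (aa P m * s^(2*m)))
        = fun m : ℕ => aa P m * s^(2*m+(P+1)) := by
      funext m; rw [pow_add]; ring
    rw [heq2] at hmul
    have hval := hmul.tsum_eq
    rw [ih hs0.le hs1] at hval
    -- hval : s^(P+1) * ((1+s^2) * G) = (2 arctan s)^(P+1)/(P+1)!
    have hsne : s^(P+1) ≠ 0 := pow_ne_zero _ (ne_of_gt hs0)
    have hs2 : (1:ℝ)+s^2 ≠ 0 := by positivity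
    have hfac : (Nat.factorial (P+1) : ℝ) ≠ 0 :=
      Nat.cast_ne_zero.mpr (Nat.factorial_ne_zero _)
    rw [hLHS]
    have hGval : G = (2*arctan s)^(P+1) / ((Nat.factorial (P+1) : ℝ) * (s^(P+1) * (1+s^2))) := by
      rw [← hGdef] at hval
      rw [eq_div_iff (mul_ne_zero hfac (mul_ne_zero hsne hs2))]
      calc G * ((Nat.factorial (P+1):ℝ) * (s^(P+1) * (1+s^2)))
          = (s^(P+1) * ((1+s^2) * G)) * (Nat.factorial (P+1):ℝ) := by ring
        _ = ((2*arctan s)^(P+1) / (Nat.factorial (P+1):ℝ)) * (Nat.factorial (P+1):ℝ) := by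
            rw [← hval]
        _ = (2*arctan s)^(P+1) := div_mul_cancel₀ _ hfac
    rw [hGval]
    field_simp



lemma invsqrt_tendsto : Tendsto (fun m : ℕ => (Real.sqrt ((m:ℝ)+1))⁻¹) atTop (𝓝 0) := by
  have h1 : Tendsto (fun m : ℕ => ((m:ℝ)+1)) atTop atTop :=
    tendsto_atTop_add_const_right _ 1 tendsto_natCast_atTop_atTop
  have h2 : Tendsto (fun m : ℕ => Real.sqrt ((m:ℝ)+1)) atTop atTop := by
    have := (tendsto_rpow_atTop (by norm_num : (0:ℝ) < 1/2)).comp h1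
    refine this.congr fun m => ?_
    rw [Function.comp_apply, ← Real.sqrt_eq_rpow]
  exact h2.inv_tendsto_atTop

lemma uu_tendsto (N : ℕ) : Tendsto (fun m => uu N m) atTop (𝓝 0) := by
  have hb : ∀ m : ℕ, uu N m ≤ (2*4^N) * (Real.sqrt ((m:ℝ)+1))⁻¹ := by
    intro m
    have hsp : (0:ℝ) < Real.sqrt ((m:ℝ)+1) := by positivity
    have hss : Real.sqrt ((m:ℝ)+1) * Real.sqrt ((m:ℝ)+1) = (m:ℝ)+1 :=
      Real.mul_self_sqrt (by positivity)
    have hN : (0:ℝ) ≤ (N:ℝ) := Nat.cast_nonneg N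
    rw [uu, div_le_iff₀ (by positivity)]
    calc t m N ≤ 4^N * Real.sqrt ((m:ℝ)+1) := t_le N m
      _ ≤ 2*4^N * (Real.sqrt ((m:ℝ)+1))⁻¹ * ((m:ℝ) + ((N:ℝ)+1)/2) := by
          rw [show (2:ℝ)*4^N * (Real.sqrt ((m:ℝ)+1))⁻¹ * ((m:ℝ) + ((N:ℝ)+1)/2)
            = 4^N * ((2*((m:ℝ) + ((N:ℝ)+1)/2)) * (Real.sqrt ((m:ℝ)+1))⁻¹) by ring]
          apply mul_le_mul_of_nonneg_left _ (by positivity)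
          rw [le_mul_inv_iff₀ hsp, hss]
          linarith
  have hmaj : Tendsto (fun m : ℕ => (2*4^N) * (Real.sqrt ((m:ℝ)+1))⁻¹) atTop (𝓝 0) := by
    have := invsqrt_tendsto.const_mul (2*4^N : ℝ)
    simpa using this
  exact squeeze_zero (fun m => (uu_pos N m).le) hb hmaj

lemma summable_aux32 : Summable (fun m : ℕ => Real.sqrt ((m:ℝ)+1)/((m:ℝ)+1)^2) := by
  have h1 : Summable (fun n : ℕ => (n:ℝ) ^ (-(3/2) : ℝ)) :=
    Real.summable_nat_rpow.mpr (by norm_num)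
  have h2 : Summable (fun m : ℕ => ((m+1 : ℕ):ℝ) ^ (-(3/2) : ℝ)) :=
    (summable_nat_add_iff 1).mpr h1
  refine h2.congr fun m => ?_
  have hp : (0:ℝ) < (m:ℝ)+1 := by positivity
  push_cast
  rw [show (-(3/2) : ℝ) = (1/2 : ℝ) - 2 by norm_num, Real.rpow_sub hp,
    Real.sqrt_eq_rpow, Real.rpow_two]

lemma sqrt_succ_le (m : ℕ) : Real.sqrt ((m:ℝ)+2) ≤ 2 * Real.sqrt ((m:ℝ)+1) := by
  have h4 : Real.sqrt 4 = 2 := by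
    rw [show (4:ℝ) = 2^2 by norm_num, Real.sqrt_sq (by norm_num : (0:ℝ) ≤ 2)]
  calc Real.sqrt ((m:ℝ)+2) ≤ Real.sqrt (4*((m:ℝ)+1)) := by
        apply Real.sqrt_le_sqrt; linarith [Nat.cast_nonneg (α := ℝ) m]
    _ = 2 * Real.sqrt ((m:ℝ)+1) := by
        rw [Real.sqrt_mul (by norm_num) _, h4]

lemma t_diff_bound (N m : ℕ) :
    0 ≤ t (m+1) N - t m N ∧
    t (m+1) N - t m N ≤ 2 * 4^N * (Real.sqrt ((m:ℝ)+1)/((m:ℝ)+1)) := by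
  cases N with
  | zero =>
    rw [t_zero', t_zero']
    constructor
    · simp
    · simp; positivity
  | succ P =>
    have hdiff : t (m+1) (P+1) - t m (P+1) = t (m+1) P / (((m:ℝ)+1) + ((P:ℝ)+1)/2) := by
      rw [t_succ, t_succ, Finset.sum_range_succ]
      push_cast; ring
    rw [hdiff]
    constructor
    · exact div_nonneg (t_pos _ _).le (by positivity)
    · have h1 : t (m+1) P ≤ 4^P * Real.sqrt ((m:ℝ)+2) := by
        have := t_le P (m+1)
        push_cast at this
        convert this using 3
        ring
      calc t (m+1) P / (((m:ℝ)+1) + ((P:ℝ)+1)/2)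
          ≤ (4^P * (2 * Real.sqrt ((m:ℝ)+1))) / ((m:ℝ)+1) := by
            apply div_le_div₀ (by positivity)
              (h1.trans (mul_le_mul_of_nonneg_left (sqrt_succ_le m) (by positivity)))
              (by positivity)
            have : (0:ℝ) ≤ (P:ℝ) := Nat.cast_nonneg P
            linarith
        _ ≤ 2 * 4^(P+1) * (Real.sqrt ((m:ℝ)+1)/((m:ℝ)+1)) := by
            have hX : (0:ℝ) ≤ Real.sqrt ((m:ℝ)+1)/((m:ℝ)+1) := by positivity
            have e1 : (4:ℝ)^P * (2 * Real.sqrt ((m:ℝ)+1)) / ((m:ℝ)+1)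
                = 2*4^P * (Real.sqrt ((m:ℝ)+1)/((m:ℝ)+1)) := by ring
            have e2 : (2:ℝ) * 4^(P+1) * (Real.sqrt ((m:ℝ)+1)/((m:ℝ)+1))
                = 8*4^P * (Real.sqrt ((m:ℝ)+1)/((m:ℝ)+1)) := by ring
            rw [e1, e2]
            nlinarith [pow_pos (show (0:ℝ) < 4 by norm_num) P]

lemma summable_var (N : ℕ) : Summable (fun m => |uu N m - uu N (m+1)|) := by
  have hmaj := summable_aux32.mul_left (8 * 4^N : ℝ)
  refine Summable.of_nonneg_of_le (fun m => abs_nonneg _) (fun m => ?_) hmaj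
  set Dm : ℝ := (m:ℝ) + ((N:ℝ)+1)/2 with hDm
  set Dm1 : ℝ := ((m+1:ℕ):ℝ) + ((N:ℝ)+1)/2 with hDm1
  have hN : (0:ℝ) ≤ (N:ℝ) := Nat.cast_nonneg N
  have hm : (0:ℝ) ≤ (m:ℝ) := Nat.cast_nonneg m
  have hDmpos : 0 < Dm := by rw [hDm]; positivity
  have hDm1pos : 0 < Dm1 := by rw [hDm1]; positivity
  have hDm1' : Dm1 = ((m:ℝ)+1) + ((N:ℝ)+1)/2 := by rw [hDm1]; push_cast; ring
  have hsplit : uu N m - uu N (m+1)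
      = t m N * (Dm1 - Dm) / (Dm * Dm1) - (t (m+1) N - t m N) / Dm1 := by
    rw [uu, uu, ← hDm, ← hDm1]
    field_simp
    ring
  have hD : Dm1 - Dm = 1 := by rw [hDm1', hDm]; ring
  obtain ⟨hd0, hd1⟩ := t_diff_bound N m
  have hA : t m N * (Dm1 - Dm) / (Dm * Dm1) ≤ 2 * 4^N * (Real.sqrt ((m:ℝ)+1)/((m:ℝ)+1)^2) := by
    rw [hD, mul_one]
    have hDD : ((m:ℝ)+1)^2/2 ≤ Dm * Dm1 := by
      rw [hDm, hDm1']
      nlinarith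
    calc t m N / (Dm * Dm1) ≤ (4^N * Real.sqrt ((m:ℝ)+1)) / (((m:ℝ)+1)^2/2) :=
          div_le_div₀ (by positivity) (t_le N m) (by positivity) hDD
      _ = 2 * 4^N * (Real.sqrt ((m:ℝ)+1)/((m:ℝ)+1)^2) := by
          field_simp
  have hB : (t (m+1) N - t m N) / Dm1 ≤ 2 * 4^N * (Real.sqrt ((m:ℝ)+1)/((m:ℝ)+1)^2) := by
    have hd1' : t (m+1) N - t m N ≤ 2 * 4^N * (Real.sqrt ((m:ℝ)+1)/((m:ℝ)+1)) := hd1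
    have hDm1ge : ((m:ℝ)+1) ≤ Dm1 := by rw [hDm1']; linarith
    calc (t (m+1) N - t m N) / Dm1
        ≤ (2 * 4^N * (Real.sqrt ((m:ℝ)+1)/((m:ℝ)+1))) / ((m:ℝ)+1) :=
          div_le_div₀ (by positivity) hd1' (by positivity) hDm1ge
      _ = 2 * 4^N * (Real.sqrt ((m:ℝ)+1)/((m:ℝ)+1)^2) := by
          field_simp
  have hApos : 0 ≤ t m N * (Dm1 - Dm) / (Dm * Dm1) := by
    rw [hD, mul_one]; exact div_nonneg (t_pos _ _).le (mul_pos hDmpos hDm1pos).le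
  have hBpos : 0 ≤ (t (m+1) N - t m N) / Dm1 := div_nonneg hd0 hDm1pos.le
  rw [hsplit]
  rw [abs_sub_le_iff]
  constructor <;> nlinarith [hA, hB, hApos, hBpos]

lemma partial_tendsto (N : ℕ) :
    ∃ l, Tendsto (fun K => ∑ m ∈ Finset.range K, aa N m) atTop (𝓝 l) := by
  have hEval : ∀ j, (∑ i ∈ Finset.range j, (-1:ℝ)^i) = (1 - (-1:ℝ)^j)/2 := by
    intro j
    induction j with
    | zero => simp
    | succ j ih =>
      rw [Finset.sum_range_succ, ih, pow_succ]
      ring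
  set E : ℕ → ℝ := fun j => ∑ i ∈ Finset.range j, (-1:ℝ)^i with hE_def
  have hE : ∀ j, |E j| ≤ 1 := by
    intro j
    rw [hE_def]
    beta_reduce
    rw [hEval j]
    rcases Nat.even_or_odd j with h | h
    · rw [h.neg_one_pow]; norm_num
    · rw [h.neg_one_pow]; norm_num
  set w : ℕ → ℝ := fun i => (uu N (i+1) - uu N i) * E (i+1) with hw_def
  have hw : Summable w := by
    refine Summable.of_norm_bounded (summable_var N) (fun i => ?_)
    rw [hw_def]
    simp only [norm_mul, Real.norm_eq_abs]
    calc |uu N (i+1) - uu N i| * |E (i+1)| ≤ |uu N (i+1) - uu N i| * 1 :=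
          mul_le_mul_of_nonneg_left (hE _) (abs_nonneg _)
      _ = |uu N i - uu N (i+1)| := by rw [mul_one, abs_sub_comm]
  have byparts : ∀ K, ∑ m ∈ Finset.range K, aa N m
      = uu N (K-1) * E K - ∑ i ∈ Finset.range (K-1), w i := by
    intro K
    have h1 : ∀ m, aa N m = uu N m • ((-1:ℝ)^m) := by
      intro m; rw [aa, smul_eq_mul]; ring
    calc ∑ m ∈ Finset.range K, aa N m = ∑ m ∈ Finset.range K, uu N m • ((-1:ℝ)^m) :=
          Finset.sum_congr rfl (fun m _ => h1 m)
      _ = uu N (K-1) • E K - ∑ i ∈ Finset.range (K-1), (uu N (i+1) - uu N i) • E (i+1) := by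
          rw [Finset.sum_range_by_parts]
      _ = uu N (K-1) * E K - ∑ i ∈ Finset.range (K-1), w i := by
          simp only [smul_eq_mul, hw_def]
  have T1 : Tendsto (fun K => ∑ i ∈ Finset.range (K-1), w i) atTop (𝓝 (∑' i, w i)) :=
    hw.hasSum.tendsto_sum_nat.comp (tendsto_sub_atTop_nat 1)
  have T2 : Tendsto (fun K => uu N (K-1) * E K) atTop (𝓝 0) := by
    refine squeeze_zero_norm (fun K => ?_) ((uu_tendsto N).comp (tendsto_sub_atTop_nat 1))
    show ‖uu N (K-1) * E K‖ ≤ uu N (K-1)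
    rw [norm_mul, Real.norm_eq_abs, Real.norm_eq_abs, abs_of_pos (uu_pos N _)]
    calc uu N (K-1) * |E K| ≤ uu N (K-1) * 1 :=
          mul_le_mul_of_nonneg_left (hE _) (uu_pos N _).le
      _ = uu N (K-1) := mul_one _
  refine ⟨0 - ∑' i, w i, ?_⟩
  exact ((T2.sub T1).congr (fun K => (byparts K).symm))



/-- Equation (24) of the paper: for `n ≥ 1`, the partial sums
`∑_{m=0}^{K} (−1)^m · t_m(n-1)/(m + n/2)` converge, as `K → ∞`, to
`π^n / (2^n · n!)`. -/
theorem arctan_power_at_one (n : ℕ) (hn : 1 ≤ n) :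
    Tendsto
      (fun K : ℕ =>
        ∑ m ∈ Finset.range (K + 1), (-1 : ℝ) ^ m * t m (n - 1) / ((m : ℝ) + (n : ℝ) / 2))
      atTop (nhds (π ^ n / (2 ^ n * (Nat.factorial n : ℝ)))) := by
  obtain ⟨N, rfl⟩ : ∃ N, n = N + 1 := ⟨n - 1, (Nat.succ_pred_eq_of_pos hn).symm⟩
  obtain ⟨l, hl⟩ := partial_tendsto N
  have hfacne : (Nat.factorial (N+1) : ℝ) ≠ 0 :=
    Nat.cast_ne_zero.mpr (Nat.factorial_ne_zero _)
  set φ : ℝ → ℝ := fun x =>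
    (2*arctan (Real.sqrt x))^(N+1) / ((Nat.factorial (N+1) : ℝ) * (Real.sqrt x)^(N+1))
    with hφ_def
  have habel := Real.tendsto_tsum_powerSeries_nhdsWithin_lt hl
  have hIoo : Set.Ioo (0:ℝ) 1 ∈ 𝓝[<] (1:ℝ) :=
    Ioo_mem_nhdsLT_of_mem (by norm_num : (1:ℝ) ∈ Set.Ioc 0 1)
  have heq : ∀ x ∈ Set.Ioo (0:ℝ) 1, (∑' m, aa N m * x^m) = φ x := by
    intro x hx
    have hy0 : 0 < Real.sqrt x := Real.sqrt_pos.mpr hx.1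
    have hyx : (Real.sqrt x)^2 = x := Real.sq_sqrt hx.1.le
    have hy1 : Real.sqrt x < 1 := by have hx2 := hx.2; nlinarith
    have hyne : (Real.sqrt x)^(N+1) ≠ 0 := pow_ne_zero _ hy0.ne'
    have e1 : (∑' m, aa N m * x^m) = ∑' m, aa N m * (Real.sqrt x)^(2*m) := by
      apply tsum_congr; intro m; conv_rhs => rw [pow_mul, hyx]
    have e2 : (Real.sqrt x)^(N+1) * (∑' m, aa N m * (Real.sqrt x)^(2*m))
        = (2*arctan (Real.sqrt x))^(N+1) / (Nat.factorial (N+1) : ℝ) := by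
      rw [← tsum_mul_left, ← mainIdentity N hy0.le hy1]
      apply tsum_congr; intro m; rw [pow_add]; ring
    rw [e1, hφ_def]
    beta_reduce
    rw [eq_div_iff (mul_ne_zero hfacne hyne)]
    calc (∑' m, aa N m * (Real.sqrt x)^(2*m)) * ((Nat.factorial (N+1):ℝ) * (Real.sqrt x)^(N+1))
        = ((Real.sqrt x)^(N+1) * (∑' m, aa N m * (Real.sqrt x)^(2*m))) * (Nat.factorial (N+1):ℝ) := by
          ring
      _ = ((2*arctan (Real.sqrt x))^(N+1) / (Nat.factorial (N+1):ℝ)) * (Nat.factorial (N+1):ℝ) := by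
          rw [e2]
      _ = (2*arctan (Real.sqrt x))^(N+1) := div_mul_cancel₀ _ hfacne
  have hfeq : (fun x => ∑' m, aa N m * x^m) =ᶠ[𝓝[<] (1:ℝ)] φ :=
    eventuallyEq_of_mem hIoo heq
  have habel' : Tendsto φ (𝓝[<] (1:ℝ)) (𝓝 l) := habel.congr' hfeq
  have hcont : ContinuousAt φ 1 := by
    apply ContinuousAt.div
    · exact ((continuous_const.mul (Real.continuous_arctan.comp Real.continuous_sqrt)).pow
        (N+1)).continuousAt
    · exact (continuous_const.mul (Real.continuous_sqrt.pow (N+1))).continuousAt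
    · simp [Real.sqrt_one]
      exact_mod_cast Nat.factorial_ne_zero (N+1)
  have hφ1 : Tendsto φ (𝓝[<] (1:ℝ)) (𝓝 (φ 1)) := hcont.continuousWithinAt.tendsto
  have hlval : l = φ 1 := tendsto_nhds_unique habel' hφ1
  have hφval : φ 1 = π^(N+1) / (2^(N+1) * (Nat.factorial (N+1) : ℝ)) := by
    rw [hφ_def]
    beta_reduce
    rw [Real.sqrt_one, Real.arctan_one, one_pow, mul_one,
      show (2:ℝ)*(π/4) = π/2 by ring, div_pow, div_div]
  have final : Tendsto (fun K => ∑ m ∈ Finset.range (K+1), aa N m) atTop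
      (𝓝 (π^(N+1) / (2^(N+1) * (Nat.factorial (N+1) : ℝ)))) := by
    have := hl.comp (tendsto_add_atTop_nat 1)
    rw [hlval, hφval] at this
    exact this
  have hterm : ∀ m : ℕ, (-1:ℝ)^m * t m N / ((m:ℝ) + ((N:ℝ)+1)/2) = aa N m := by
    intro m; rw [aa, uu]; ring
  simp only [Nat.add_sub_cancel, Nat.cast_add, Nat.cast_one]
  exact final.congr fun K => (Finset.sum_congr rfl fun m _ => (hterm m).symm)
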